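/- Pathwise lower bound used for order optimality (key step in Corollary 2): Let d ≥ 1, let p > 0 be a real number, and let 𝔧 ≥ 1 be a real number. There exists ν > 0, depending only on p and 𝔧, such that for every α ∈ (0,1), every x ∈ ℝ^d with ‖x‖ ≤ 1/(1−α), and every sequence (x_t)_{t≥0} in ℝ^d with x₀ = x and ‖x_{t+1} − x_t‖ ≤ 𝔧 for all t ≥ 0, one has Σ_{t=0}^∞ α^t ‖x_t‖^p ≥ ν ‖x‖^{p+1}. -/

import Mathlib

noncomputable section

set_option maxHeartbeats 1000000

theorem discounted_moment_pathwise_lower_bound_order_optimality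
    (d : ℕ) (hd : 1 ≤ d) (p jmp : ℝ) (hp : 0 < p) (hjmp : 1 ≤ jmp) :
    ∃ ν : ℝ, 0 < ν ∧
      ∀ α : ℝ, 0 < α → α < 1 →
      ∀ x : EuclideanSpace ℝ (Fin d), ‖x‖ ≤ 1 / (1 - α) →
      ∀ xs : ℕ → EuclideanSpace ℝ (Fin d), xs 0 = x →
      (∀ t : ℕ, ‖xs (t + 1) - xs t‖ ≤ jmp) →
      ν * ‖x‖ ^ (p + 1) ≤ (∑' t : ℕ, α ^ t * ‖xs t‖ ^ p) := by
  have hjmp0 : (0:ℝ) < jmp := lt_of_lt_of_le one_pos hjmp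
  refine ⟨1 / (2 ^ (p + 2) * jmp), by positivity, ?_⟩
  intro α hα hα1 x hx xs hxs0 hjump
  set X := ‖x‖ with hXdef
  have hX0 : 0 ≤ X := norm_nonneg x
  -- bounds on ‖xs t‖
  have hub : ∀ t : ℕ, ‖xs t‖ ≤ X + t * jmp := by
    intro t
    induction t with
    | zero => simp [hxs0]; exact le_of_eq hXdef.symm
    | succ n ih =>
        have h1 : ‖xs (n+1)‖ ≤ ‖xs n‖ + ‖xs (n+1) - xs n‖ := by
          have := norm_add_le (xs n) (xs (n+1) - xs n)
          simpa using this
        have := hjump n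
        push_cast
        nlinarith
  have hlb : ∀ t : ℕ, X - t * jmp ≤ ‖xs t‖ := by
    intro t
    induction t with
    | zero => simp [hxs0]; exact le_of_eq hXdef
    | succ n ih =>
        have h1 : ‖xs n‖ ≤ ‖xs (n+1)‖ + ‖xs (n+1) - xs n‖ := by
          have h2 : ‖xs n‖ - ‖xs (n+1)‖ ≤ ‖xs n - xs (n+1)‖ := norm_sub_norm_le _ _
          have h3 : ‖xs n - xs (n+1)‖ = ‖xs (n+1) - xs n‖ := norm_sub_rev _ _
          linarith
        have := hjump n
        push_cast
        nlinarith
  -- nonnegativity of terms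
  have hfnn : ∀ t : ℕ, 0 ≤ α ^ t * ‖xs t‖ ^ p := by
    intro t
    exact mul_nonneg (pow_nonneg hα.le _) (Real.rpow_nonneg (norm_nonneg _) p)
  -- summability
  set k := ⌈p⌉₊ with hk
  have hpk : p ≤ (k : ℝ) := Nat.le_ceil p
  have hsum : Summable (fun t : ℕ => α ^ t * ‖xs t‖ ^ p) := by
    have hg : Summable (fun n : ℕ => (n : ℝ) ^ k * α ^ n) :=
      summable_pow_mul_geometric_of_norm_lt_one k
        (by rw [Real.norm_eq_abs, abs_of_pos hα]; exact hα1)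
    have hg1 : Summable (fun n : ℕ => ((n : ℝ) + 1) ^ k * α ^ (n + 1)) := by
      have := (summable_nat_add_iff 1).mpr hg
      convert this using 2 with n
      · rfl
      push_cast
      ring
    have hg2 : Summable (fun n : ℕ => ((n : ℝ) + 1) ^ k * α ^ n) := by
      have := hg1.mul_left (1 / α)
      convert this using 2 with n
      · rfl
      field_simp
      ring
    have hg3 := hg2.mul_left ((1 + X + jmp) ^ k)
    refine Summable.of_nonneg_of_le hfnn ?_ hg3
    intro t
    have hb1 : ‖xs t‖ ^ p ≤ (1 + X + t * jmp) ^ p := by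
      apply Real.rpow_le_rpow (norm_nonneg _) _ hp.le
      have := hub t
      nlinarith [mul_nonneg (Nat.cast_nonneg t : (0:ℝ) ≤ t) hjmp0.le]
    have hbase1 : (1:ℝ) ≤ 1 + X + t * jmp := by
      nlinarith [mul_nonneg (Nat.cast_nonneg t : (0:ℝ) ≤ t) hjmp0.le]
    have hb2 : (1 + X + t * jmp) ^ p ≤ (1 + X + t * jmp) ^ (k : ℝ) :=
      Real.rpow_le_rpow_of_exponent_le hbase1 hpk
    have hb3 : (1 + X + (t : ℝ) * jmp) ^ (k : ℝ) = (1 + X + (t : ℝ) * jmp) ^ (k : ℕ) :=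
      Real.rpow_natCast _ k
    have hb4 : (1 + X + (t : ℝ) * jmp) ^ (k : ℕ) ≤ ((1 + X + jmp) * ((t : ℝ) + 1)) ^ (k : ℕ) := by
      apply pow_le_pow_left₀ (by linarith)
      nlinarith [(Nat.cast_nonneg t : (0:ℝ) ≤ t), hX0, hjmp0.le]
    have hb5 : ((1 + X + jmp) * ((t : ℝ) + 1)) ^ (k : ℕ) = (1 + X + jmp) ^ k * ((t : ℝ) + 1) ^ k :=
      mul_pow _ _ _
    have hxp : ‖xs t‖ ^ p ≤ (1 + X + jmp) ^ k * ((t : ℝ) + 1) ^ k := by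
      rw [hb3] at hb2
      calc ‖xs t‖ ^ p ≤ (1 + X + t * jmp) ^ p := hb1
        _ ≤ (1 + X + (t : ℝ) * jmp) ^ (k : ℕ) := hb2
        _ ≤ ((1 + X + jmp) * ((t : ℝ) + 1)) ^ (k : ℕ) := hb4
        _ = _ := hb5
    calc α ^ t * ‖xs t‖ ^ p ≤ α ^ t * ((1 + X + jmp) ^ k * ((t : ℝ) + 1) ^ k) := by
          exact mul_le_mul_of_nonneg_left hxp (pow_nonneg hα.le _)
      _ = (1 + X + jmp) ^ k * (((t : ℝ) + 1) ^ k * α ^ t) := by ring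
  -- main case split
  rcases eq_or_lt_of_le hX0 with hXz | hXpos
  · rw [← hXz]
    rw [show (0:ℝ) ^ (p + 1) = 0 from Real.zero_rpow (by linarith)]
    rw [mul_zero]
    exact tsum_nonneg hfnn
  · set N : ℕ := ⌊X / (2 * jmp)⌋₊ + 1 with hNdef
    have hdivnn : 0 ≤ X / (2 * jmp) := by positivity
    have hN2 : X / (2 * jmp) ≤ (N : ℝ) := by
      have := Nat.lt_floor_add_one (X / (2 * jmp))
      push_cast [hNdef]
      linarith
    have hterm : ∀ t ∈ Finset.range N, (1/2 : ℝ) * (X/2) ^ p ≤ α ^ t * ‖xs t‖ ^ p := by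
      intro t ht
      rw [Finset.mem_range] at ht
      have htle : (t : ℝ) ≤ X / (2 * jmp) := by
        have h1 : t ≤ ⌊X / (2 * jmp)⌋₊ := Nat.lt_succ_iff.mp ht
        calc (t : ℝ) ≤ (⌊X / (2 * jmp)⌋₊ : ℝ) := Nat.cast_le.mpr h1
          _ ≤ X / (2 * jmp) := Nat.floor_le hdivnn
      have htjmp : (t : ℝ) * jmp ≤ X / 2 := by
        have h := mul_le_mul_of_nonneg_right htle hjmp0.le
        have he : X / (2 * jmp) * jmp = X / 2 := by
          field_simp
        rw [he] at h
        exact h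
      have hxt : X / 2 ≤ ‖xs t‖ := by have := hlb t; linarith
      have hαt : (1/2 : ℝ) ≤ α ^ t := by
        have hbern : 1 + (t : ℝ) * (α - 1) ≤ (1 + (α - 1)) ^ t :=
          one_add_mul_le_pow (by linarith) t
        have h1α : 0 < 1 - α := by linarith
        have hX1 : X * (1 - α) ≤ 1 := by
          rw [le_div_iff₀ h1α] at hx
          linarith
        have ht1 : (t : ℝ) * (1 - α) ≤ 1 / 2 := by
          have h2 : (t : ℝ) * (1 - α) ≤ X / (2 * jmp) * (1 - α) :=
            mul_le_mul_of_nonneg_right htle h1α.le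
          have h3 : X / (2 * jmp) * (1 - α) ≤ 1 / (2 * jmp) := by
            rw [div_mul_eq_mul_div, div_le_div_iff₀ (by positivity) (by positivity)]
            nlinarith
          have h4 : 1 / (2 * jmp) ≤ 1 / 2 := by
            apply div_le_div_of_nonneg_left one_pos.le two_pos
            linarith
          linarith
        have : (1 + (α - 1)) ^ t = α ^ t := by ring_nf
        nlinarith [hbern]
      have hxtp : (X/2) ^ p ≤ ‖xs t‖ ^ p :=
        Real.rpow_le_rpow (by positivity) hxt hp.le
      exact mul_le_mul hαt hxtp (by positivity) (pow_nonneg hα.le _)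
    have hsumN : (N : ℝ) * ((1/2 : ℝ) * (X/2) ^ p) ≤ ∑ t ∈ Finset.range N, α ^ t * ‖xs t‖ ^ p := by
      have := Finset.sum_le_sum hterm
      rwa [Finset.sum_const, Finset.card_range, nsmul_eq_mul] at this
    have htsum : ∑ t ∈ Finset.range N, α ^ t * ‖xs t‖ ^ p ≤ ∑' t : ℕ, α ^ t * ‖xs t‖ ^ p :=
      Summable.sum_le_tsum _ (fun t _ => hfnn t) hsum
    have hkey : 1 / (2 ^ (p + 2) * jmp) * X ^ (p + 1) =
        (X / (2 * jmp)) * ((1/2 : ℝ) * (X/2) ^ p) := by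
      have e1 : X ^ (p + 1) = X ^ p * X := by
        rw [Real.rpow_add hXpos p 1, Real.rpow_one]
      have e2 : (X / 2) ^ p = X ^ p / 2 ^ p := Real.div_rpow hX0 (by norm_num : (0:ℝ) ≤ 2) p
      have e3 : (2:ℝ) ^ (p + 2) = 2 ^ p * 4 := by
        rw [Real.rpow_add two_pos p 2]
        norm_num
      rw [e1, e2, e3]
      have h2p : (0:ℝ) < 2 ^ p := Real.rpow_pos_of_pos two_pos p
      field_simp
      ring
    calc 1 / (2 ^ (p + 2) * jmp) * X ^ (p + 1)
        = (X / (2 * jmp)) * ((1/2 : ℝ) * (X/2) ^ p) := hkey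
      _ ≤ (N : ℝ) * ((1/2 : ℝ) * (X/2) ^ p) := by
          apply mul_le_mul_of_nonneg_right hN2
          positivity
      _ ≤ ∑ t ∈ Finset.range N, α ^ t * ‖xs t‖ ^ p := hsumN
      _ ≤ _ := htsum
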